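/- The subset S = {(a, b) ∈ ℝ² : 1 ≤ a, 1 ≤ b, a ≤ b² + 1, a·b ≤ a + b² + 1, a·b² ≤ a² + b² + 2a + 1, b ≤ a + 1} of the plane (with its subspace topology) is homeomorphic to the closed unit disc, i.e. to the closed ball of radius 1 centered at the origin in two-dimensional Euclidean space. (The superunitary region of the B₂/C₂ cluster algebra is a topological hexagon, homeomorphic to the B₂ generalized associahedron.) -/

import Mathlib

open Set Metric Filter Topology Pointwise

/-! ### A compact star-shaped body is homeomorphic to the closed unit ball

We first prove a general auxiliary result: if `K` is a compact subset of a real normed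
space with `0` in its interior, such that for every `x ∈ K` and `0 ≤ t < 1` the
point `t • x` lies in the interior of `K`, then `K` is homeomorphic to the
closed unit ball.  The proof goes through the Minkowski gauge of `K`. -/

section StarBody

variable {E : Type*} [NormedAddCommGroup E] [NormedSpace ℝ E]

theorem B2aux_starBody_homeo {K : Set E} (hK : IsCompact K) (h0 : (0 : E) ∈ interior K)
    (hseg : ∀ x ∈ K, ∀ t : ℝ, 0 ≤ t → t < 1 → t • x ∈ interior K) :
    Nonempty (K ≃ₜ (Metric.closedBall (0 : E) 1)) := by
  classical
  have hKcl : IsClosed K := hK.isClosed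
  have h0K : (0 : E) ∈ K := interior_subset h0
  obtain ⟨R, hR0, hRK⟩ : ∃ R > 0, ∀ z ∈ K, ‖z‖ ≤ R := hK.isBounded.exists_pos_norm_le
  obtain ⟨ε, hε0, hεK⟩ : ∃ ε > 0, ball (0 : E) ε ⊆ K := by
    rcases Metric.mem_nhds_iff.1 (mem_interior_iff_mem_nhds.1 h0) with ⟨ε, hε0, hε⟩
    exact ⟨ε, hε0, hε⟩
  set A : E → Set ℝ := fun x => {r : ℝ | 0 < r ∧ x ∈ r • K} with hA_def
  set q : E → ℝ := fun x => sInf (A x) with hq_def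
  -- basic facts about the index sets
  have hbdd : ∀ x, BddBelow (A x) := fun x => ⟨0, fun r hr => hr.1.le⟩
  have hmem_ball_smul : ∀ (x : E) (r : ℝ), 0 < r → ‖x‖ < r * ε → x ∈ r • K := by
    intro x r hr hx
    rw [mem_smul_set_iff_inv_smul_mem₀ hr.ne']
    apply hεK
    rw [mem_ball_zero_iff, norm_smul, Real.norm_eq_abs, abs_of_pos (inv_pos.2 hr),
      inv_mul_lt_iff₀ hr]
    exact hx
  have hAne : ∀ x, (A x).Nonempty := by
    intro x
    refine ⟨(‖x‖ + 1) / ε, by positivity, hmem_ball_smul x _ (by positivity) ?_⟩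
    rw [div_mul_cancel₀ _ hε0.ne']
    linarith [norm_nonneg x]
  have hmono : ∀ {x : E} {r r' : ℝ}, r ∈ A x → r < r' → r' ∈ A x := by
    intro x r r' hr hrr'
    obtain ⟨k, hk, rfl⟩ := hr.2
    have hr0 := hr.1
    have hr'0 : 0 < r' := lt_trans hr0 hrr'
    refine ⟨hr'0, ⟨(r'⁻¹ * r) • k, ?_, ?_⟩⟩
    · refine interior_subset (hseg k hk _ (by positivity) ?_)
      rw [inv_mul_eq_div, div_lt_one hr'0]
      exact hrr'
    · show r' • ((r'⁻¹ * r) • k) = r • k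
      rw [smul_smul, mul_inv_cancel_left₀ hr'0.ne']
  have hqle : ∀ {x : E} {r : ℝ}, r ∈ A x → q x ≤ r := fun hr => csInf_le (hbdd _) hr
  have hq0le : ∀ x, 0 ≤ q x := fun x => le_csInf (hAne x) fun r hr => hr.1.le
  have hmem_of : ∀ {x : E} {c : ℝ}, 0 < c → q x ≤ c → x ∈ c • K := by
    intro x c hc hqc
    have h1 : ∀ c' > c, x ∈ c' • K := by
      intro c' hc'
      obtain ⟨r, hrA, hrlt⟩ := exists_lt_of_csInf_lt (hAne x) (lt_of_le_of_lt hqc hc')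
      exact (hmono hrA hrlt).2
    have h3 : ∀ n : ℕ, (c + ((n : ℝ) + 1)⁻¹)⁻¹ • x ∈ K := by
      intro n
      have := h1 (c + ((n : ℝ) + 1)⁻¹) (lt_add_of_pos_right c (by positivity))
      exact (mem_smul_set_iff_inv_smul_mem₀ (by positivity : (c + ((n : ℝ) + 1)⁻¹) ≠ 0) _ _).1 this
    have h2 : Tendsto (fun n : ℕ => (c + ((n : ℝ) + 1)⁻¹)⁻¹ • x) atTop (𝓝 (c⁻¹ • x)) := by
      have ht : Tendsto (fun n : ℕ => c + ((n : ℝ) + 1)⁻¹) atTop (𝓝 c) := by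
        have h4 := tendsto_one_div_add_atTop_nhds_zero_nat (𝕜 := ℝ)
        simp only [one_div] at h4
        simpa using tendsto_const_nhds.add h4
      exact (ht.inv₀ hc.ne').smul_const x
    have := hKcl.mem_of_tendsto h2 (Filter.Eventually.of_forall h3)
    exact (mem_smul_set_iff_inv_smul_mem₀ hc.ne' _ _).2 this
  have hq_zero : ∀ {x : E}, q x = 0 → x = 0 := by
    intro x hx
    by_contra hne
    have hnx : 0 < ‖x‖ := norm_pos_iff.2 hne
    have hc : 0 < ‖x‖ / (2 * R) := by positivity
    obtain ⟨k, hk, hkx⟩ := hmem_of hc (hx.le.trans hc.le)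
    have hkx' : (‖x‖ / (2 * R)) • k = x := hkx
    have h1 : ‖x‖ ≤ ‖x‖ / (2 * R) * R := by
      calc ‖x‖ = ‖(‖x‖ / (2 * R)) • k‖ := by rw [hkx']
        _ = ‖x‖ / (2 * R) * ‖k‖ := by
            rw [norm_smul, Real.norm_eq_abs, abs_of_pos hc]
        _ ≤ ‖x‖ / (2 * R) * R := mul_le_mul_of_nonneg_left (hRK k hk) hc.le
    have h2 : ‖x‖ / (2 * R) * R = ‖x‖ / 2 := by field_simp
    rw [h2] at h1
    linarith
  have hq_zero' : q 0 = 0 := by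
    refine le_antisymm ?_ (hq0le 0)
    refine le_of_forall_pos_le_add fun r hr => ?_
    have : r ∈ A 0 := ⟨hr, ⟨0, h0K, smul_zero r⟩⟩
    simpa using hqle this
  have hq_pos : ∀ {x : E}, x ≠ 0 → 0 < q x :=
    fun hx => lt_of_le_of_ne (hq0le _) fun h => hx (hq_zero h.symm)
  have hhomog_le : ∀ (x : E) (c : ℝ), 0 < c → q (c • x) ≤ c * q x := by
    intro x c hc
    refine le_of_forall_pos_le_add fun δ hδ => ?_
    have hd : 0 < c * q x + δ := by nlinarith [hq0le x]
    have hxd : x ∈ ((c * q x + δ) / c) • K := by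
      refine hmem_of (by positivity) ?_
      rw [le_div_iff₀ hc, mul_comm]
      nlinarith
    obtain ⟨k, hk, hkx⟩ := hxd
    have hkx' : ((c * q x + δ) / c) • k = x := hkx
    refine hqle ⟨hd, ⟨k, hk, ?_⟩⟩
    show (c * q x + δ) • k = c • x
    calc (c * q x + δ) • k = c • (((c * q x + δ) / c) • k) := by
          rw [smul_smul, mul_div_cancel₀ _ hc.ne']
      _ = c • x := by rw [hkx']
  have hhomog : ∀ (x : E) (c : ℝ), 0 < c → q (c • x) = c * q x := by
    intro x c hc
    refine le_antisymm (hhomog_le x c hc) ?_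
    have h1 := hhomog_le (c • x) c⁻¹ (inv_pos.2 hc)
    rw [smul_smul, inv_mul_cancel₀ hc.ne', one_smul] at h1
    have h2 := mul_le_mul_of_nonneg_left h1 hc.le
    rw [← mul_assoc, mul_inv_cancel₀ hc.ne', one_mul] at h2
    exact h2
  have hqK : ∀ {x : E}, x ∈ K ↔ q x ≤ 1 := by
    intro x
    constructor
    · intro hx
      exact hqle ⟨one_pos, ⟨x, hx, one_smul ℝ x⟩⟩
    · intro hx
      obtain ⟨k, hk, hkx⟩ := hmem_of one_pos hx
      have hkx' : (1:ℝ) • k = x := hkx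
      rw [one_smul] at hkx'
      exact hkx' ▸ hk
  have hq_bound : ∀ x : E, q x ≤ 2 / ε * ‖x‖ := by
    intro x
    rcases eq_or_ne x 0 with rfl | hx
    · simp [hq_zero']
    · have hnx : 0 < ‖x‖ := norm_pos_iff.2 hx
      have hm : (2 * ‖x‖ / ε) ∈ A x := by
        refine ⟨by positivity, hmem_ball_smul x _ (by positivity) ?_⟩
        rw [div_mul_cancel₀ _ hε0.ne']
        linarith
      calc q x ≤ 2 * ‖x‖ / ε := hqle hm
        _ = 2 / ε * ‖x‖ := by ring
  have hopen : ∀ c : ℝ, IsOpen {y : E | q y < c} := by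
    intro c
    rcases le_or_gt c 0 with hc | hc
    · convert isOpen_empty
      rw [eq_empty_iff_forall_notMem]
      intro y hy
      exact absurd (lt_of_lt_of_le hy hc) (not_lt.2 (hq0le y))
    · rw [isOpen_iff_forall_mem_open]
      intro y hy
      have hyq : q y < c := hy
      have hlam0 : 0 < (q y + c) / 2 := by have := hq0le y; positivity
      have hylam : q y ≤ (q y + c) / 2 := by linarith
      set lam : ℝ := (q y + c) / 2 with hlam_def
      have hlamc : lam < c := by rw [hlam_def]; linarith
      set mu : ℝ := (lam + c) / 2 with hmu_def
      have hmu0 : 0 < mu := by positivity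
      have hlammu : lam < mu := by rw [hmu_def]; linarith
      have hmuc : mu < c := by rw [hmu_def]; linarith
      obtain ⟨k, hk, hky⟩ := hmem_of hlam0 hylam
      have hky' : lam • k = y := hky
      refine ⟨mu • interior K, ?_, isOpen_interior.smul₀ hmu0.ne', ?_⟩
      · intro z hz
        have hz' : z ∈ mu • K := smul_set_mono interior_subset hz
        exact lt_of_le_of_lt (hqle ⟨hmu0, hz'⟩) hmuc
      · refine ⟨(mu⁻¹ * lam) • k, hseg k hk _ (by positivity) ?_, ?_⟩
        · rw [inv_mul_eq_div, div_lt_one hmu0]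
          exact hlammu
        · show mu • ((mu⁻¹ * lam) • k) = y
          rw [smul_smul, mul_inv_cancel_left₀ hmu0.ne']
          exact hky'
  have hqcont : Continuous q := by
    rw [continuous_iff_continuousAt]
    intro x
    rw [ContinuousAt, tendsto_order]
    constructor
    · intro c hc
      rcases lt_or_ge c 0 with hc0 | hc0
      · exact Filter.Eventually.of_forall fun y => lt_of_lt_of_le hc0 (hq0le y)
      · rcases eq_or_lt_of_le hc0 with heq | hc0
        · subst heq
          have hx0 : x ≠ 0 := by
            intro h; rw [h, hq_zero'] at hc; exact absurd hc (lt_irrefl 0)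
          filter_upwards [isOpen_compl_singleton.mem_nhds hx0] with y hy
          exact hq_pos hy
        · have hcmp : IsCompact (c • K) := by
            rw [← Set.image_smul]
            exact hK.image (continuous_const_smul c)
          have hop : IsOpen {y : E | c < q y} := by
            have : {y : E | c < q y} = (c • K)ᶜ := by
              ext y
              simp only [mem_compl_iff, mem_setOf_eq]
              constructor
              · intro h hy
                exact absurd (hqle ⟨hc0, hy⟩) (not_le.2 h)
              · intro h
                by_contra h'
                exact h (hmem_of hc0 (not_lt.1 h'))
            rw [this]
            exact hcmp.isClosed.isOpen_compl
          exact hop.mem_nhds hc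
    · intro c hc
      exact (hopen c).mem_nhds hc
  -- the forward and backward maps
  set G : E → E := fun y => (q y / ‖y‖) • y with hG_def
  set H : E → E := fun y => (‖y‖ / q y) • y with hH_def
  have hG0 : G 0 = 0 := by simp [hG_def]
  have hH0 : H 0 = 0 := by simp [hH_def]
  have hGnorm : ∀ y : E, ‖G y‖ = q y := by
    intro y
    rcases eq_or_ne y 0 with rfl | hy
    · simp [hG_def, hq_zero']
    · have hny : (0:ℝ) < ‖y‖ := norm_pos_iff.2 hy
      rw [hG_def]
      simp only
      rw [norm_smul, Real.norm_eq_abs, abs_of_nonneg (div_nonneg (hq0le y) hny.le),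
        div_mul_cancel₀ _ hny.ne']
  have hGcont : Continuous G := by
    rw [continuous_iff_continuousAt]
    intro x
    rcases eq_or_ne x 0 with rfl | hx
    · rw [ContinuousAt, hG0]
      apply squeeze_zero_norm (fun y => (hGnorm y) ▸ hq_bound y)
      have : Tendsto (fun y : E => 2 / ε * ‖y‖) (𝓝 0) (𝓝 (2 / ε * ‖(0:E)‖)) :=
        (continuous_const.mul continuous_norm).continuousAt
      simpa using this
    · have hny : (0:ℝ) < ‖x‖ := norm_pos_iff.2 hx
      exact ((hqcont.continuousAt.div continuous_norm.continuousAt hny.ne').smul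
        continuousAt_id)
  have hHG : ∀ x : E, H (G x) = x := by
    intro x
    rcases eq_or_ne x 0 with rfl | hx
    · rw [hG0, hH0]
    · have hnx : (0:ℝ) < ‖x‖ := norm_pos_iff.2 hx
      have hqx : 0 < q x := hq_pos hx
      have hcoef : 0 < q x / ‖x‖ := div_pos hqx hnx
      have hqG : q (G x) = (q x / ‖x‖) * q x := by
        rw [hG_def]; exact hhomog x _ hcoef
      rw [hH_def]
      simp only
      rw [hGnorm x, hqG, hG_def]
      simp only
      rw [smul_smul]
      have : q x / (q x / ‖x‖ * q x) * (q x / ‖x‖) = 1 := by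
        field_simp
      rw [this, one_smul]
  have hGH : ∀ y : E, G (H y) = y := by
    intro y
    rcases eq_or_ne y 0 with rfl | hy
    · rw [hH0, hG0]
    · have hny : (0:ℝ) < ‖y‖ := norm_pos_iff.2 hy
      have hqy : 0 < q y := hq_pos hy
      have hcoef : 0 < ‖y‖ / q y := div_pos hny hqy
      have hqH : q (H y) = (‖y‖ / q y) * q y := by
        rw [hH_def]; exact hhomog y _ hcoef
      have hHnorm : ‖H y‖ = (‖y‖ / q y) * ‖y‖ := by
        rw [hH_def]
        simp only
        rw [norm_smul, Real.norm_eq_abs, abs_of_pos hcoef]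
      rw [hG_def]
      simp only
      rw [hqH, hHnorm, hH_def]
      simp only
      rw [smul_smul]
      have : ‖y‖ / q y * q y / (‖y‖ / q y * ‖y‖) * (‖y‖ / q y) = 1 := by
        field_simp
      rw [this, one_smul]
  -- membership
  have hGmem : ∀ x ∈ K, G x ∈ Metric.closedBall (0 : E) 1 := by
    intro x hx
    rw [mem_closedBall_zero_iff, hGnorm]
    exact hqK.1 hx
  have hHmem : ∀ y ∈ Metric.closedBall (0 : E) 1, H y ∈ K := by
    intro y hy
    rcases eq_or_ne y 0 with rfl | hy0
    · rw [hH0]; exact h0K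
    · have hqy : 0 < q y := hq_pos hy0
      have hny : 0 < ‖y‖ := norm_pos_iff.2 hy0
      have hcoef : 0 < ‖y‖ / q y := div_pos hny hqy
      have hqH : q (H y) = (‖y‖ / q y) * q y := by
        rw [hH_def]; exact hhomog y _ hcoef
      refine hqK.2 ?_
      rw [hqH, div_mul_cancel₀ _ hqy.ne']
      exact mem_closedBall_zero_iff.1 hy
  -- the equivalence
  let e : K ≃ (Metric.closedBall (0 : E) 1) :=
    { toFun := fun x => ⟨G x, hGmem x.1 x.2⟩
      invFun := fun y => ⟨H y, hHmem y.1 y.2⟩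
      left_inv := fun x => Subtype.ext (hHG x)
      right_inv := fun y => Subtype.ext (hGH y) }
  have : CompactSpace K := isCompact_iff_compactSpace.1 hK
  exact ⟨Continuous.homeoOfEquivCompactToT2 (f := e)
    ((hGcont.comp continuous_subtype_val).subtype_mk _)⟩

end StarBody

/-! ### Elementary bounds and the star-shape property of the `B₂` superunitary region -/

section Algebra

private lemma B2_b_le_three {a b : ℝ} (h1 : 1 ≤ a) (h2 : 1 ≤ b) (h3 : a ≤ b^2+1)
    (h4 : a*b ≤ a + b^2 + 1) (h5 : a*b^2 ≤ a^2+b^2+2*a+1) (h6 : b ≤ a+1) :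
    b ≤ 3 := by
  nlinarith [sq_nonneg (a-2), sq_nonneg (b-1), sq_nonneg (a-b),
    mul_nonneg (sub_nonneg.2 h1) (sub_nonneg.2 h2)]

private lemma B2_a_le_five {a b : ℝ} (h1 : 1 ≤ a) (h2 : 1 ≤ b) (h3 : a ≤ b^2+1)
    (h4 : a*b ≤ a + b^2 + 1) (h5 : a*b^2 ≤ a^2+b^2+2*a+1) (h6 : b ≤ a+1) :
    a ≤ 5 := by
  have hb3 : b ≤ 3 := B2_b_le_three h1 h2 h3 h4 h5 h6
  rcases le_or_gt b 2 with hb | hb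
  · nlinarith
  · nlinarith [mul_nonneg (sub_nonneg.2 hb.le) (sub_nonneg.2 hb3)]

private lemma B2_star {a b t : ℝ} (h1 : 1 ≤ a) (h2 : 1 ≤ b) (h3 : a ≤ b^2+1)
    (h4 : a*b ≤ a + b^2 + 1) (h5 : a*b^2 ≤ a^2+b^2+2*a+1) (h6 : b ≤ a+1)
    (ht0 : 0 ≤ t) (ht1 : t < 1) :
    1 < 2 + t*(a-2) ∧ 1 < 2 + t*(b-2) ∧
    2 + t*(a-2) < (2 + t*(b-2))^2 + 1 ∧
    (2 + t*(a-2))*(2 + t*(b-2)) < (2 + t*(a-2)) + (2 + t*(b-2))^2 + 1 ∧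
    (2 + t*(a-2))*(2 + t*(b-2))^2 <
      (2 + t*(a-2))^2 + (2 + t*(b-2))^2 + 2*(2 + t*(a-2)) + 1 ∧
    2 + t*(b-2) < (2 + t*(a-2)) + 1 := by
  have hb3 : b ≤ 3 := B2_b_le_three h1 h2 h3 h4 h5 h6
  have ha5 : a ≤ 5 := B2_a_le_five h1 h2 h3 h4 h5 h6
  refine ⟨by nlinarith, by nlinarith, ?_, ?_, ?_, by nlinarith⟩
  · nlinarith [mul_nonneg (mul_nonneg ht0 ht0) (sub_nonneg.2 h3), sq_nonneg (1-t),
      mul_nonneg (mul_nonneg (sub_nonneg.2 ht1.le) ht0)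
        (by nlinarith : (0:ℝ) ≤ 4*b - a - 3 + 3)]
  · nlinarith [mul_nonneg (mul_nonneg ht0 ht0) (sub_nonneg.2 h4), sq_nonneg (1-t),
      mul_nonneg (mul_nonneg (sub_nonneg.2 ht1.le) ht0)
        (by nlinarith : (0:ℝ) ≤ 2*b - a + 4)]
  · have F1 : (0:ℝ) ≤ 2*a - 4*b + 11 := by nlinarith [sq_nonneg (b-1), sq_nonneg (b-3)]
    have F2 : (0:ℝ) ≤ 10 + 4*(a-2) - 8*(b-2) + (a-2)^2 - (b-2)^2 - 4*(a-2)*(b-2) := by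
      nlinarith [sq_nonneg (a-2), sq_nonneg (b-3),
        mul_nonneg (sub_nonneg.2 h2) (sub_nonneg.2 hb3),
        mul_nonneg (sub_nonneg.2 h1) (sub_nonneg.2 hb3),
        mul_nonneg (sub_nonneg.2 h1) (sub_nonneg.2 ha5)]
    have hQ : (0:ℝ) < 5*(1+t+t^2) + t*(1+t)*(2*(a-2)-4*(b-2))
        + t^2*((a-2)^2-(b-2)^2-4*(a-2)*(b-2)) := by
      nlinarith [mul_nonneg (mul_nonneg ht0 (sub_nonneg.2 ht1.le)) F1,
        mul_nonneg (mul_nonneg ht0 ht0) F2]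
    nlinarith [mul_pos (by linarith : (0:ℝ) < 1 - t) hQ,
      mul_nonneg (mul_nonneg (mul_nonneg ht0 ht0) ht0) (sub_nonneg.2 h5)]

end Algebra

/-! ### The main theorem -/

private def B2S : Set (ℝ × ℝ) := {p : ℝ × ℝ | 1 ≤ p.1 ∧ 1 ≤ p.2 ∧
    p.1 ≤ p.2 ^ 2 + 1 ∧
    p.1 * p.2 ≤ p.1 + p.2 ^ 2 + 1 ∧
    p.1 * p.2 ^ 2 ≤ p.1 ^ 2 + p.2 ^ 2 + 2 * p.1 + 1 ∧
    p.2 ≤ p.1 + 1}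

/-- The superunitary region translated by `(-2, -2)`, inside the Euclidean plane. -/
private def B2K : Set (EuclideanSpace ℝ (Fin 2)) :=
  {x : EuclideanSpace ℝ (Fin 2) | 1 ≤ x 0 + 2 ∧ 1 ≤ x 1 + 2 ∧
    x 0 + 2 ≤ (x 1 + 2) ^ 2 + 1 ∧
    (x 0 + 2) * (x 1 + 2) ≤ (x 0 + 2) + (x 1 + 2) ^ 2 + 1 ∧
    (x 0 + 2) * (x 1 + 2) ^ 2 ≤ (x 0 + 2) ^ 2 + (x 1 + 2) ^ 2 + 2 * (x 0 + 2) + 1 ∧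
    x 1 + 2 ≤ (x 0 + 2) + 1}

/-- The corresponding set of strict inequalities. -/
private def B2U : Set (EuclideanSpace ℝ (Fin 2)) :=
  {x : EuclideanSpace ℝ (Fin 2) | 1 < x 0 + 2 ∧ 1 < x 1 + 2 ∧
    x 0 + 2 < (x 1 + 2) ^ 2 + 1 ∧
    (x 0 + 2) * (x 1 + 2) < (x 0 + 2) + (x 1 + 2) ^ 2 + 1 ∧
    (x 0 + 2) * (x 1 + 2) ^ 2 < (x 0 + 2) ^ 2 + (x 1 + 2) ^ 2 + 2 * (x 0 + 2) + 1 ∧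
    x 1 + 2 < (x 0 + 2) + 1}

private lemma B2_cont0 : Continuous fun x : EuclideanSpace ℝ (Fin 2) => x 0 :=
  (EuclideanSpace.proj (0 : Fin 2)).continuous

private lemma B2_cont1 : Continuous fun x : EuclideanSpace ℝ (Fin 2) => x 1 :=
  (EuclideanSpace.proj (1 : Fin 2)).continuous

private lemma B2K_closed : IsClosed B2K := by
  have hca : Continuous fun x : EuclideanSpace ℝ (Fin 2) => x 0 + 2 :=
    B2_cont0.add continuous_const
  have hcb : Continuous fun x : EuclideanSpace ℝ (Fin 2) => x 1 + 2 :=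
    B2_cont1.add continuous_const
  unfold B2K
  simp only [setOf_and]
  refine IsClosed.inter (isClosed_le continuous_const hca) ?_
  refine IsClosed.inter (isClosed_le continuous_const hcb) ?_
  refine IsClosed.inter (isClosed_le hca (((hcb.pow 2)).add continuous_const)) ?_
  refine IsClosed.inter (isClosed_le (hca.mul hcb)
    ((hca.add (hcb.pow 2)).add continuous_const)) ?_
  refine IsClosed.inter (isClosed_le (hca.mul (hcb.pow 2))
    ((((hca.pow 2).add (hcb.pow 2)).add (continuous_const.mul hca)).add continuous_const)) ?_
  exact isClosed_le hcb (hca.add continuous_const)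

private lemma B2U_open : IsOpen B2U := by
  have hca : Continuous fun x : EuclideanSpace ℝ (Fin 2) => x 0 + 2 :=
    B2_cont0.add continuous_const
  have hcb : Continuous fun x : EuclideanSpace ℝ (Fin 2) => x 1 + 2 :=
    B2_cont1.add continuous_const
  unfold B2U
  simp only [setOf_and]
  refine IsOpen.inter (isOpen_lt continuous_const hca) ?_
  refine IsOpen.inter (isOpen_lt continuous_const hcb) ?_
  refine IsOpen.inter (isOpen_lt hca (((hcb.pow 2)).add continuous_const)) ?_
  refine IsOpen.inter (isOpen_lt (hca.mul hcb)
    ((hca.add (hcb.pow 2)).add continuous_const)) ?_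
  refine IsOpen.inter (isOpen_lt (hca.mul (hcb.pow 2))
    ((((hca.pow 2).add (hcb.pow 2)).add (continuous_const.mul hca)).add continuous_const)) ?_
  exact isOpen_lt hcb (hca.add continuous_const)

private lemma B2K_compact : IsCompact B2K := by
  refine Metric.isCompact_of_isClosed_isBounded B2K_closed ?_
  rw [Metric.isBounded_iff_subset_closedBall 0]
  refine ⟨4, fun x hx => ?_⟩
  obtain ⟨h1, h2, h3, h4, h5, h6⟩ := hx
  have hb3 : x 1 + 2 ≤ 3 := B2_b_le_three h1 h2 h3 h4 h5 h6
  have ha5 : x 0 + 2 ≤ 5 := B2_a_le_five h1 h2 h3 h4 h5 h6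
  rw [mem_closedBall_zero_iff]
  have hnorm : ‖x‖ = Real.sqrt (‖x 0‖ ^ 2 + ‖x 1‖ ^ 2) := by
    rw [EuclideanSpace.norm_eq]
    congr 1
    rw [Fin.sum_univ_two]
  rw [hnorm]
  have h0b : ‖x 0‖ ≤ 3 := by
    rw [Real.norm_eq_abs, abs_le]; constructor <;> linarith
  have h1b : ‖x 1‖ ≤ 1 := by
    rw [Real.norm_eq_abs, abs_le]; constructor <;> linarith
  have hsum : ‖x 0‖ ^ 2 + ‖x 1‖ ^ 2 ≤ 16 := by
    nlinarith [norm_nonneg (x 0), norm_nonneg (x 1)]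
  calc Real.sqrt (‖x 0‖ ^ 2 + ‖x 1‖ ^ 2) ≤ Real.sqrt 16 := Real.sqrt_le_sqrt hsum
    _ = 4 := by
        rw [show (16:ℝ) = 4 ^ 2 by norm_num, Real.sqrt_sq (by norm_num : (0:ℝ) ≤ 4)]

private lemma B2U_subset_interior : B2U ⊆ interior B2K := by
  refine interior_maximal ?_ B2U_open
  intro x hx
  obtain ⟨h1, h2, h3, h4, h5, h6⟩ := hx
  exact ⟨h1.le, h2.le, h3.le, h4.le, h5.le, h6.le⟩

private lemma B2K_zero_mem : (0 : EuclideanSpace ℝ (Fin 2)) ∈ interior B2K := by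
  apply B2U_subset_interior
  have e0 : (0 : EuclideanSpace ℝ (Fin 2)) 0 = 0 := rfl
  have e1 : (0 : EuclideanSpace ℝ (Fin 2)) 1 = 0 := rfl
  show (0 : EuclideanSpace ℝ (Fin 2)) ∈ B2U
  simp only [B2U, Set.mem_setOf_eq, e0, e1]
  norm_num

private lemma B2K_star : ∀ x ∈ B2K, ∀ t : ℝ, 0 ≤ t → t < 1 →
    t • x ∈ interior B2K := by
  intro x hx t ht0 ht1
  obtain ⟨h1, h2, h3, h4, h5, h6⟩ := hx
  apply B2U_subset_interior
  have hstar := B2_star h1 h2 h3 h4 h5 h6 ht0 ht1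
  simp only [add_sub_cancel_right] at hstar
  obtain ⟨g1, g2, g3, g4, g5, g6⟩ := hstar
  have es0 : (t • x) 0 = t * x 0 := rfl
  have es1 : (t • x) 1 = t * x 1 := rfl
  show t • x ∈ B2U
  simp only [B2U, Set.mem_setOf_eq]
  rw [es0, es1]
  refine ⟨?_, ?_, ?_, ?_, ?_, ?_⟩
  · linarith
  · linarith
  · nlinarith [g3]
  · nlinarith [g4]
  · nlinarith [g5]
  · linarith

private lemma B2S_compact : IsCompact B2S := by
  refine Metric.isCompact_of_isClosed_isBounded ?_ ?_
  · unfold B2S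
    simp only [setOf_and]
    refine IsClosed.inter (isClosed_le continuous_const continuous_fst) ?_
    refine IsClosed.inter (isClosed_le continuous_const continuous_snd) ?_
    refine IsClosed.inter (isClosed_le (by fun_prop) (by fun_prop)) ?_
    refine IsClosed.inter (isClosed_le (by fun_prop) (by fun_prop)) ?_
    refine IsClosed.inter (isClosed_le (by fun_prop) (by fun_prop)) ?_
    exact isClosed_le (by fun_prop) (by fun_prop)
  · have hsub : B2S ⊆ Set.Icc ((1:ℝ), (1:ℝ)) ((5:ℝ), (3:ℝ)) := by
      intro p hp
      obtain ⟨h1, h2, h3, h4, h5, h6⟩ := hp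
      exact ⟨⟨h1, h2⟩, ⟨B2_a_le_five h1 h2 h3 h4 h5 h6, B2_b_le_three h1 h2 h3 h4 h5 h6⟩⟩
    exact (isCompact_Icc.isBounded).subset hsub

/-- The translation map from the plane to the Euclidean plane. -/
private noncomputable def B2φ : ℝ × ℝ → EuclideanSpace ℝ (Fin 2) := fun p =>
  (WithLp.equiv 2 (Fin 2 → ℝ)).symm ![p.1 - 2, p.2 - 2]

private lemma B2φ_apply0 (p : ℝ × ℝ) : B2φ p 0 = p.1 - 2 := rfl
private lemma B2φ_apply1 (p : ℝ × ℝ) : B2φ p 1 = p.2 - 2 := rfl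

private lemma B2φ_cont : Continuous B2φ := by
  apply (PiLp.continuous_toLp 2 (fun _ : Fin 2 => ℝ)).comp
  apply continuous_pi
  intro i
  fin_cases i
  · simp only [Matrix.cons_val_zero]
    exact continuous_fst.sub continuous_const
  · simp only [Matrix.cons_val_one, Matrix.head_cons]
    exact continuous_snd.sub continuous_const

/-- The superunitary region of the `B₂/C₂` cluster algebra, embedded in the
plane via the initial cluster, is homeomorphic to the closed unit disc. -/
theorem B2_superunitary_region_homeomorph_closed_disc :
    Nonempty (
      ({p : ℝ × ℝ | 1 ≤ p.1 ∧ 1 ≤ p.2 ∧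
          p.1 ≤ p.2 ^ 2 + 1 ∧
          p.1 * p.2 ≤ p.1 + p.2 ^ 2 + 1 ∧
          p.1 * p.2 ^ 2 ≤ p.1 ^ 2 + p.2 ^ 2 + 2 * p.1 + 1 ∧
          p.2 ≤ p.1 + 1} : Set (ℝ × ℝ)) ≃ₜ
        (Metric.closedBall (0 : EuclideanSpace ℝ (Fin 2)) 1)) := by
  classical
  obtain ⟨eK⟩ := B2aux_starBody_homeo B2K_compact B2K_zero_mem B2K_star
  have hφmem : ∀ p ∈ B2S, B2φ p ∈ B2K := by
    intro p hp
    obtain ⟨h1, h2, h3, h4, h5, h6⟩ := hp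
    show B2φ p ∈ B2K
    simp only [B2K, Set.mem_setOf_eq, B2φ_apply0, B2φ_apply1, sub_add_cancel]
    exact ⟨h1, h2, h3, h4, h5, h6⟩
  let eq1 : B2S ≃ B2K :=
    { toFun := fun p => ⟨B2φ p.1, hφmem p.1 p.2⟩
      invFun := fun x => ⟨(x.1 0 + 2, x.1 1 + 2), x.2⟩
      left_inv := by
        rintro ⟨p, hp⟩
        apply Subtype.ext
        apply Prod.ext <;> simp [B2φ_apply0, B2φ_apply1, sub_add_cancel]
      right_inv := by
        rintro ⟨x, hx⟩
        apply Subtype.ext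
        show B2φ (x 0 + 2, x 1 + 2) = x
        unfold B2φ
        rw [Equiv.symm_apply_eq]
        funext i
        fin_cases i <;>
          simp [WithLp.equiv_apply] }
  have : CompactSpace B2S := isCompact_iff_compactSpace.1 B2S_compact
  have heq1cont : Continuous eq1 :=
    ((B2φ_cont.comp continuous_subtype_val).subtype_mk _)
  let e1 : B2S ≃ₜ B2K := Continuous.homeoOfEquivCompactToT2 (f := eq1) heq1cont
  exact ⟨e1.trans eK⟩
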